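/- Let (X=[n], (θ_i), (p_i), b, q) be a knapsack instance with nonnegative integer data. Construct G with V = {u_0} ∪ {u_i, v_i, w_i : i ∈ [n]}, E = {{u_{i-1}, v_i}, {u_{i-1}, w_i}, {u_i, v_i}, {u_i, w_i} : i ∈ [n]}, weights w(v_i)=θ_i, α(v_i)=p_i, and w(u_i)=α(u_i)=w(w_i)=α(w_i)=0. Then there exists I ⊆ [n] with Σ_{i∈I} θ_i ≤ b and Σ_{i∈I} p_i ≥ q if and only if there exists a path P from u_0 to u_n in G whose vertex set U satisfies Σ_{u∈U} w(u) ≤ b and Σ_{u∈U} α(u) ≥ q. -/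

import Mathlib

open SimpleGraph

/-- Vertices of the gadget graph: `u_0, ..., u_n`, `v_1, ..., v_n`, `w_1, ..., w_n`. -/
abbrev GadV (n : ℕ) : Type := Fin (n + 1) ⊕ Fin n ⊕ Fin n

/-- The gadget graph: `v_i` and `w_i` are adjacent exactly to `u_{i-1}` and `u_i`. -/
def GadG (n : ℕ) : SimpleGraph (GadV n) :=
  SimpleGraph.fromRel (fun x y =>
    match x, y with
    | .inl j, .inr (.inl i) => j = i.castSucc ∨ j = i.succ
    | .inl j, .inr (.inr i) => j = i.castSucc ∨ j = i.succ
    | _, _ => False)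

/-- Weights: `w(v_i) = θ_i`, all other vertices have weight `0`. -/
def gadW (n : ℕ) (θ : Fin n → ℕ) : GadV n → ℕ
  | .inr (.inl i) => θ i
  | _ => 0

/-- Values: `α(v_i) = p_i`, all other vertices have value `0`. -/
def gadA (n : ℕ) (pv : Fin n → ℕ) : GadV n → ℕ
  | .inr (.inl i) => pv i
  | _ => 0

lemma gadA_eq_gadW {n : ℕ} (pv : Fin n → ℕ) : gadA n pv = gadW n pv := by
  funext u; rcases u with j | i | i <;> rfl

lemma sum_gadW {n : ℕ} (g : Fin n → ℕ) (S : Finset (GadV n)) :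
    ∑ u ∈ S, gadW n g u =
      ∑ i ∈ Finset.univ.filter (fun i => (Sum.inr (Sum.inl i) : GadV n) ∈ S), g i := by
  classical
  set f : Fin n ↪ GadV n :=
    ⟨fun i => Sum.inr (Sum.inl i), by intro a b h; simpa using h⟩ with hf
  set I := Finset.univ.filter (fun i => (Sum.inr (Sum.inl i) : GadV n) ∈ S) with hI
  have hsub : I.map f ⊆ S := by
    intro u hu
    simp only [Finset.mem_map, hf, Function.Embedding.coeFn_mk] at hu
    obtain ⟨i, hi, rfl⟩ := hu
    exact (by simpa [hI] using hi : (Sum.inr (Sum.inl i) : GadV n) ∈ S)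
  have := Finset.sum_subset hsub (f := gadW n g) ?_
  · rw [← this, Finset.sum_map]
    rfl
  · intro u hu hnu
    rcases u with j | i | i
    · rfl
    · exfalso
      apply hnu
      simp only [Finset.mem_map, hf, Function.Embedding.coeFn_mk]
      exact ⟨i, by simpa [hI] using hu, rfl⟩
    · rfl

variable {n : ℕ}

/-- Chosen middle vertex for step `i`: `v_i` if `i ∈ I`, else `w_i`. -/
def xI (I : Finset (Fin n)) (i : Fin n) : GadV n :=
  if i ∈ I then Sum.inr (Sum.inl i) else Sum.inr (Sum.inr i)

lemma adj_left (I : Finset (Fin n)) (i : Fin n) :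
    (GadG n).Adj (Sum.inl i.castSucc) (xI I i) := by
  unfold xI
  split <;>
  · rw [GadG, SimpleGraph.fromRel_adj]
    exact ⟨by simp, Or.inl (Or.inl rfl)⟩

lemma adj_right (I : Finset (Fin n)) (i : Fin n) :
    (GadG n).Adj (xI I i) (Sum.inl i.succ) := by
  unfold xI
  split <;>
  · rw [GadG, SimpleGraph.fromRel_adj]
    exact ⟨by simp, Or.inr (Or.inr rfl)⟩

lemma xI_ne_inl (I : Finset (Fin n)) (i : Fin n) (m : Fin (n+1)) :
    xI I i ≠ Sum.inl m := by
  unfold xI; split <;> simp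

lemma xI_inj (I : Finset (Fin n)) {i i' : Fin n} (h : xI I i = xI I i') : i = i' := by
  unfold xI at h
  split at h <;> split at h <;> simp_all

lemma xI_eq_v (I : Finset (Fin n)) (i i' : Fin n) :
    xI I i = Sum.inr (Sum.inl i') ↔ i = i' ∧ i ∈ I := by
  unfold xI
  split <;> rename_i hi
  · constructor
    · intro h; exact ⟨by simpa using h, hi⟩
    · rintro ⟨rfl, _⟩; rfl
  · constructor
    · intro h; simp at h
    · rintro ⟨rfl, h⟩; exact absurd h hi

def walkFrom (I : Finset (Fin n)) : (k j : ℕ) → (h : j + k = n) →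
    (GadG n).Walk (Sum.inl ⟨j, by omega⟩) (Sum.inl (Fin.last n))
  | 0, j, h =>
    Walk.nil.copy (by congr 1; exact Fin.ext (by simp [Fin.last]; omega)) rfl
  | k+1, j, h =>
    Walk.cons (adj_left I ⟨j, by omega⟩)
      (Walk.cons (adj_right I ⟨j, by omega⟩) (walkFrom I k (j+1) (by omega)))

lemma mem_support_walkFrom (I : Finset (Fin n)) :
    ∀ (k j : ℕ) (h : j + k = n) (u : GadV n),
    u ∈ (walkFrom I k j h).support ↔
      ((∃ m : Fin (n+1), j ≤ m.val ∧ u = Sum.inl m) ∨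
       (∃ i : Fin n, j ≤ i.val ∧ u = xI I i)) := by
  intro k
  induction k with
  | zero =>
    intro j h u
    simp only [walkFrom, Walk.support_copy, Walk.support_nil, List.mem_singleton]
    constructor
    · rintro rfl
      exact Or.inl ⟨⟨j, by omega⟩, le_refl _, by congr 1; exact Fin.ext (by simp [Fin.last]; omega)⟩
    · rintro (⟨m, hm, rfl⟩ | ⟨i, hi, rfl⟩)
      · congr 1; exact Fin.ext (by simp [Fin.last]; omega)
      · exfalso; have := i.isLt; omega
  | succ k ih =>
    intro j h u
    have h' : j + 1 + k = n := by omega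
    simp only [walkFrom, Walk.support_cons, List.mem_cons, ih (j+1) h']
    constructor
    · rintro (rfl | rfl | (⟨m, hm, rfl⟩ | ⟨i, hi, rfl⟩))
      · exact Or.inl ⟨⟨j, by omega⟩, le_refl _, rfl⟩
      · exact Or.inr ⟨⟨j, by omega⟩, le_refl _, rfl⟩
      · exact Or.inl ⟨m, by omega, rfl⟩
      · exact Or.inr ⟨i, by omega, rfl⟩
    · rintro (⟨m, hm, rfl⟩ | ⟨i, hi, rfl⟩)
      · by_cases hmj : m.val = j
        · exact Or.inl (by congr 1; exact Fin.ext (by simp [hmj]))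
        · exact Or.inr (Or.inr (Or.inl ⟨m, by omega, rfl⟩))
      · by_cases hij : i.val = j
        · refine Or.inr (Or.inl ?_)
          congr 1
          exact Fin.ext (by simp [hij])
        · exact Or.inr (Or.inr (Or.inr ⟨i, by omega, rfl⟩))

lemma nodup_support_walkFrom (I : Finset (Fin n)) :
    ∀ (k j : ℕ) (h : j + k = n), (walkFrom I k j h).support.Nodup := by
  intro k
  induction k with
  | zero => intro j h; simp [walkFrom, Walk.support_copy]
  | succ k ih =>
    intro j h
    have h' : j + 1 + k = n := by omega
    simp only [walkFrom, Walk.support_cons, List.nodup_cons, List.mem_cons]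
    refine ⟨?_, ?_, ih (j+1) h'⟩
    · rintro (h1 | h2)
      · exact (xI_ne_inl I _ _ h1.symm).elim
      · rcases (mem_support_walkFrom I k (j+1) h' _).mp h2 with ⟨m, hm, heq⟩ | ⟨i, hi, heq⟩
        · injection heq with h3
          have hmj : m.val = j := by rw [← h3]
          omega
        · exact (xI_ne_inl I i _ heq.symm).elim
    · intro h2
      rcases (mem_support_walkFrom I k (j+1) h' _).mp h2 with ⟨m, hm, heq⟩ | ⟨i, hi, heq⟩
      · exact (xI_ne_inl I _ m heq).elim
      · have := xI_inj I heq
        have : i.val = j := by rw [← this]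
        omega

theorem stmt7 (n : ℕ) (θ pv : Fin n → ℕ) (b q : ℕ) :
    (∃ I : Finset (Fin n), ∑ i ∈ I, θ i ≤ b ∧ ∑ i ∈ I, pv i ≥ q) ↔
    (∃ p : (GadG n).Walk (Sum.inl 0) (Sum.inl (Fin.last n)), p.IsPath ∧
      ∑ u ∈ p.support.toFinset, gadW n θ u ≤ b ∧
      ∑ u ∈ p.support.toFinset, gadA n pv u ≥ q) := by
  classical
  constructor
  · rintro ⟨I, hw, ha⟩
    have h0 : 0 + n = n := by omega
    set p : (GadG n).Walk (Sum.inl 0) (Sum.inl (Fin.last n)) :=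
      (walkFrom I n 0 h0).copy (by congr 1) rfl with hp
    have hkey : ∀ g : Fin n → ℕ, ∑ u ∈ p.support.toFinset, gadW n g u = ∑ i ∈ I, g i := by
      intro g
      rw [sum_gadW]
      congr 1
      ext i
      simp only [Finset.mem_filter, Finset.mem_univ, true_and, List.mem_toFinset, hp,
        Walk.support_copy, mem_support_walkFrom I n 0 h0]
      constructor
      · rintro (⟨m, _, heq⟩ | ⟨i', _, heq⟩)
        · exact absurd heq (by simp)
        · obtain ⟨rfl, hmem⟩ := (xI_eq_v I i' i).mp heq.symm
          exact hmem
      · intro hi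
        exact Or.inr ⟨i, Nat.zero_le _, ((xI_eq_v I i i).mpr ⟨rfl, hi⟩).symm⟩
    refine ⟨p, ?_, ?_, ?_⟩
    · rw [Walk.isPath_def, hp, Walk.support_copy]
      exact nodup_support_walkFrom I n 0 h0
    · rw [hkey θ]; exact hw
    · rw [gadA_eq_gadW, hkey pv]; exact ha
  · rintro ⟨p, hp, hw, ha⟩
    refine ⟨Finset.univ.filter (fun i => (Sum.inr (Sum.inl i) : GadV n) ∈ p.support.toFinset),
      ?_, ?_⟩
    · rw [← sum_gadW]; exact hw
    · rw [← sum_gadW]; rw [gadA_eq_gadW] at ha; exact ha
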